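/- Define $J(\lambda) = \int_0^1 \int_0^1 \frac{1}{\alpha\beta} \mu\big((0,\beta] \cap (\lambda - (0,\alpha])\big)\, d\alpha\, d\beta$. Then for all real $\lambda$ with $1 < \lambda < 2$, one has $J(\lambda) = 2 + 2(\lambda-1)(\log(\lambda-1) - 1) + \lambda\big(\zeta(2) - \log^2(\lambda) - 2\mathrm{Li}_2(1/\lambda)\big)$. -/

import Mathlib

open MeasureTheory

noncomputable def Jfun (lam : ℝ) : ℝ × ℝ → ℝ := fun p =>
  (volume (Set.Ioc (0:ℝ) p.2 ∩ (fun t => lam - t) '' Set.Ioc (0:ℝ) p.1)).toReal / (p.1 * p.2)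

noncomputable def J (lam : ℝ) : ℝ :=
  ∫ p in (Set.Ioo (0:ℝ) 1) ×ˢ (Set.Ioo (0:ℝ) 1), Jfun lam p

noncomputable def Li2 (x : ℝ) : ℝ := ∑' n : ℕ, x ^ (n + 1) / ((n : ℝ) + 1) ^ 2

open Real Filter Topology


lemma sumSq : Summable (fun n : ℕ => 1 / ((n : ℝ) + 1) ^ 2) := by
  have h := (summable_nat_add_iff 1).mpr (Real.summable_one_div_nat_pow.mpr (le_refl 2))
  apply h.congr
  intro n
  push_cast
  ring

lemma Li2_continuousOn : ContinuousOn Li2 (Set.Icc (-1:ℝ) 1) := by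
  apply continuousOn_tsum (u := fun n : ℕ => 1 / ((n : ℝ) + 1) ^ 2)
    (fun i => (continuousOn_pow _).div_const _) sumSq
  intro n x hx
  have hb : (0:ℝ) < ((n : ℝ) + 1) ^ 2 := by positivity
  rw [norm_div, norm_pow, Real.norm_eq_abs x, Real.norm_eq_abs, abs_of_pos hb]
  have h1 : |x| ^ (n+1) ≤ 1 := pow_le_one₀ (abs_nonneg x) (abs_le.2 ⟨hx.1, hx.2⟩)
  exact div_le_div_of_nonneg_right h1 hb.le

lemma Li2_zero : Li2 0 = 0 := by simp [Li2]

lemma Li2_one : Li2 1 = Real.pi ^ 2 / 6 := by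
  have h := hasSum_zeta_two
  have h2 : HasSum (fun n : ℕ => (1:ℝ) / ((n:ℝ)+1) ^ 2) (Real.pi ^ 2 / 6) := by
    have := (hasSum_nat_add_iff' 1).mpr h
    simpa using this
  simpa [Li2] using h2.tsum_eq


lemma Li2_hasDerivAt {x : ℝ} (hx : |x| < 1) (hx0 : x ≠ 0) :
    HasDerivAt Li2 (-Real.log (1 - x) / x) x := by
  set r : ℝ := (|x| + 1) / 2 with hr
  have hxr : |x| < r := by rw [hr]; linarith
  have hr1 : r < 1 := by rw [hr]; linarith
  have hr0 : 0 < r := lt_of_le_of_lt (abs_nonneg x) hxr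
  have key : HasDerivAt Li2 (∑' n : ℕ, x ^ n / ((n : ℝ) + 1)) x := by
    apply hasDerivAt_tsum_of_isPreconnected (u := fun n : ℕ => r ^ n)
      (g := fun n y => y ^ (n + 1) / ((n : ℝ) + 1) ^ 2)
      (g' := fun n y => y ^ n / ((n : ℝ) + 1))
      (summable_geometric_of_lt_one hr0.le hr1) (isOpen_Ioo (a := -r) (b := r))
      (convex_Ioo _ _).isPreconnected ?_ ?_ (y₀ := 0) ?_ ?_ ?_
    · intro n y _
      have h := (hasDerivAt_pow (n + 1) y).div_const (((n : ℝ) + 1) ^ 2)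
      refine h.congr_deriv ?_
      have hn : ((n : ℝ) + 1) ≠ 0 := by positivity
      push_cast
      field_simp
    · intro n y hy
      rw [norm_div, norm_pow, Real.norm_eq_abs]
      have h1 : |y| ≤ r := by
        rw [abs_le]; exact ⟨hy.1.le, hy.2.le⟩
      have h2 : |y| ^ n ≤ r ^ n := pow_le_pow_left₀ (abs_nonneg y) h1 n
      have h3 : (1:ℝ) ≤ ‖((n:ℝ) + 1)‖ := by
        rw [Real.norm_eq_abs, abs_of_pos (by positivity)]; simp
      calc |y| ^ n / ‖((n:ℝ) + 1)‖ ≤ |y| ^ n / 1 := by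
            apply div_le_div_of_nonneg_left (by positivity) one_pos h3
        _ = |y| ^ n := by ring
        _ ≤ r ^ n := h2
    · exact Set.mem_Ioo.2 ⟨by linarith, hr0⟩
    · apply summable_zero.congr; intro n; simp
    · exact Set.mem_Ioo.2 ⟨neg_lt_of_abs_lt hxr, lt_of_abs_lt hxr⟩
  have hsum : HasSum (fun n : ℕ => x ^ n / ((n : ℝ) + 1)) (-Real.log (1 - x) / x) := by
    have h := hasSum_pow_div_log_of_abs_lt_one hx
    have h2 := h.mul_left x⁻¹
    have heq : ∀ n : ℕ, x⁻¹ * (x ^ (n+1) / ((n:ℝ)+1)) = x ^ n / ((n:ℝ)+1) := by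
      intro n
      rw [pow_succ]
      field_simp
    have h3 : HasSum (fun n : ℕ => x ^ n / ((n:ℝ)+1)) (x⁻¹ * -Real.log (1-x)) :=
      h2.congr_fun (fun n => (heq n).symm)
    convert h3 using 1
    rw [div_eq_inv_mul]
  rwa [hsum.tsum_eq] at key
noncomputable def refl_f (x : ℝ) : ℝ := Li2 x + Li2 (1 - x) + Real.log x * Real.log (1 - x)

lemma refl_f_hasDerivAt {x : ℝ} (hx : x ∈ Set.Ioo (0:ℝ) 1) : HasDerivAt refl_f 0 x := by
  obtain ⟨hx0, hx1⟩ := hx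
  have h1x0 : (0:ℝ) < 1 - x := by linarith
  have d1 : HasDerivAt Li2 (-Real.log (1 - x) / x) x :=
    Li2_hasDerivAt (abs_lt.2 ⟨by linarith, hx1⟩) hx0.ne'
  have dinner : HasDerivAt (fun y : ℝ => 1 - y) (-1) x := by
    simpa using (hasDerivAt_id x).const_sub 1
  have d2' : HasDerivAt Li2 (-Real.log (1 - (1 - x)) / (1 - x)) (1 - x) :=
    Li2_hasDerivAt (abs_lt.2 ⟨by linarith, by linarith⟩) h1x0.ne'
  have d2 : HasDerivAt (fun y => Li2 (1 - y)) (Real.log x / (1 - x)) x := by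
    have := d2'.comp x dinner
    refine this.congr_deriv ?_
    simp only [sub_sub_cancel]
    field_simp
  have d3 : HasDerivAt (fun y => Real.log y * Real.log (1 - y))
      (x⁻¹ * Real.log (1 - x) + Real.log x * (-1 / (1 - x))) x := by
    apply (Real.hasDerivAt_log hx0.ne').mul
    have := (Real.hasDerivAt_log h1x0.ne').comp x dinner
    refine this.congr_deriv ?_
    field_simp
  have := (d1.add d2).add d3
  refine this.congr_deriv ?_
  field_simp
  ring

lemma refl_f_const {x y : ℝ} (hx : x ∈ Set.Ioo (0:ℝ) 1) (hy : y ∈ Set.Ioo (0:ℝ) 1) :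
    refl_f x = refl_f y := by
  wlog hxy : x < y generalizing x y
  · rcases eq_or_lt_of_le (not_lt.1 hxy) with h | h
    · rw [h]
    · exact (this hy hx h).symm
  have hsub : Set.Icc x y ⊆ Set.Ioo (0:ℝ) 1 := fun z hz =>
    ⟨lt_of_lt_of_le hx.1 hz.1, lt_of_le_of_lt hz.2 hy.2⟩
  have hcont : ContinuousOn refl_f (Set.Icc x y) := fun z hz =>
    ((refl_f_hasDerivAt (hsub hz)).continuousAt).continuousWithinAt
  obtain ⟨c, hc, hc2⟩ := exists_hasDerivAt_eq_slope refl_f (fun _ => 0) hxy hcont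
    (fun z hz => refl_f_hasDerivAt (hsub (Set.Ioo_subset_Icc_self hz)))
  have h0 : (refl_f y - refl_f x) / (y - x) = 0 := hc2.symm
  rw [div_eq_zero_iff] at h0
  rcases h0 with h0 | h0
  · linarith
  · linarith

lemma refl_f_eq_pi (x : ℝ) (hx : x ∈ Set.Ioo (0:ℝ) 1) : refl_f x = Real.pi ^ 2 / 6 := by
  have hne : (𝓝[Set.Ioo (0:ℝ) 1] 0).NeBot := by
    apply mem_closure_iff_nhdsWithin_neBot.1
    rw [closure_Ioo one_ne_zero.symm]
    exact ⟨le_refl 0, by norm_num⟩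
  have hIooSub : Set.Ioo (0:ℝ) 1 ⊆ Set.Icc (-1:ℝ) 1 := fun z hz => ⟨by linarith [hz.1], hz.2.le⟩
  -- Li2 tendsto
  have t1 : Tendsto Li2 (𝓝[Set.Ioo (0:ℝ) 1] 0) (𝓝 0) := by
    have := ((Li2_continuousOn 0 (by norm_num)).mono hIooSub).tendsto
    rwa [Li2_zero] at this
  have t2 : Tendsto (fun x => Li2 (1 - x)) (𝓝[Set.Ioo (0:ℝ) 1] 0) (𝓝 (Real.pi ^ 2 / 6)) := by
    have hmap : Tendsto (fun x : ℝ => 1 - x) (𝓝[Set.Ioo (0:ℝ) 1] 0) (𝓝[Set.Icc (-1:ℝ) 1] 1) := by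
      rw [tendsto_nhdsWithin_iff]
      constructor
      · have hc : Continuous (fun x : ℝ => 1 - x) := by continuity
        have := (hc.tendsto 0).mono_left (nhdsWithin_le_nhds (s := Set.Ioo (0:ℝ) 1))
        simpa using this
      · filter_upwards [self_mem_nhdsWithin] with z hz
        exact ⟨by linarith [hz.2], by linarith [hz.1]⟩
    have := (Li2_continuousOn 1 (by norm_num)).tendsto.comp hmap
    rwa [Li2_one] at this
  have t3 : Tendsto (fun x => Real.log x * Real.log (1 - x)) (𝓝[Set.Ioo (0:ℝ) 1] 0) (𝓝 0) := by
    have hb : Tendsto (fun x : ℝ => 2 * |Real.log x * x|) (𝓝[Set.Ioo (0:ℝ) 1] 0) (𝓝 0) := by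
      have h := tendsto_log_mul_rpow_nhdsGT_zero one_pos
      simp only [Real.rpow_one] at h
      have h2 : Tendsto (fun x : ℝ => Real.log x * x) (𝓝[Set.Ioo (0:ℝ) 1] 0) (𝓝 0) :=
        h.mono_left (nhdsWithin_mono 0 (fun z hz => hz.1))
      have := (h2.abs).const_mul 2
      simpa using this
    apply squeeze_zero_norm' _ hb
    filter_upwards [self_mem_nhdsWithin,
      inter_mem_nhdsWithin (Set.Ioo (0:ℝ) 1) (Metric.ball_mem_nhds (0:ℝ) (by norm_num : (0:ℝ) < 1/2))] with z hz hz2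
    obtain ⟨hz0, hz1⟩ := hz
    have hzhalf : z < 1/2 := by
      have := hz2.2
      rw [Metric.mem_ball, Real.dist_eq, abs_lt] at this
      linarith [this.2]
    have hlog1z : |Real.log (1 - z)| ≤ 2 * z := by
      rw [abs_of_nonpos (Real.log_nonpos (by linarith) (by linarith))]
      have h2 : (1 - z)⁻¹ ≤ 1 + 2 * z := by
        rw [inv_le_iff_one_le_mul₀ (by linarith)]
        nlinarith
      have h3 : Real.log (1 - z)⁻¹ ≤ 2 * z := by
        calc Real.log (1 - z)⁻¹ ≤ Real.log (1 + 2 * z) :=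
              Real.log_le_log (inv_pos.2 (by linarith : (0:ℝ) < 1 - z)) h2
          _ ≤ 2 * z := by
              have := Real.log_le_sub_one_of_pos (x := 1 + 2*z) (by linarith)
              linarith
      rw [Real.log_inv] at h3
      linarith
    rw [Real.norm_eq_abs, abs_mul]
    calc |Real.log z| * |Real.log (1 - z)| ≤ |Real.log z| * (2 * z) := by
          apply mul_le_mul_of_nonneg_left hlog1z (abs_nonneg _)
      _ = 2 * (|Real.log z| * |z|) := by rw [abs_of_pos hz0]; ring
      _ = 2 * |Real.log z * z| := by rw [abs_mul]
  have ttot : Tendsto refl_f (𝓝[Set.Ioo (0:ℝ) 1] 0) (𝓝 (0 + Real.pi ^ 2 / 6 + 0)) :=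
    (t1.add t2).add t3
  have tconst : Tendsto (fun _ : ℝ => refl_f x) (𝓝[Set.Ioo (0:ℝ) 1] 0) (𝓝 (refl_f x)) :=
    tendsto_const_nhds
  have heq : refl_f =ᶠ[𝓝[Set.Ioo (0:ℝ) 1] 0] (fun _ => refl_f x) := by
    filter_upwards [self_mem_nhdsWithin] with z hz
    exact refl_f_const hz hx
  have := tendsto_nhds_unique (ttot.congr' heq) tconst
  rw [← this]; ring
variable {lam : ℝ}

lemma Jfun_eq (h1 : 1 < lam) (h2 : lam < 2) {p : ℝ × ℝ}
    (hp : p ∈ (Set.Ioo (0:ℝ) 1) ×ˢ (Set.Ioo (0:ℝ) 1)) :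
    Jfun lam p = max (p.1 + p.2 - lam) 0 / (p.1 * p.2) := by
  obtain ⟨⟨ha0, ha1⟩, hb0, hb1⟩ := hp
  have himg : (fun t => lam - t) '' Set.Ioc (0:ℝ) p.1 = Set.Ico (lam - p.1) lam := by
    rw [Set.image_const_sub_Ioc]; norm_num
  have hset : Set.Ioc (0:ℝ) p.2 ∩ Set.Ico (lam - p.1) lam = Set.Icc (lam - p.1) p.2 := by
    ext x
    simp only [Set.mem_inter_iff, Set.mem_Ioc, Set.mem_Ico, Set.mem_Icc]
    constructor
    · rintro ⟨⟨_, hxb⟩, hxl, _⟩; exact ⟨hxl, hxb⟩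
    · rintro ⟨hxl, hxb⟩
      exact ⟨⟨by linarith, hxb⟩, hxl, by linarith⟩
  simp only [Jfun, himg, hset, Real.volume_Icc, ENNReal.toReal_ofReal']
  rw [show p.2 - (lam - p.1) = p.1 + p.2 - lam by ring]

lemma inner_zero (h1 : 1 < lam) {a : ℝ} (ha : 0 < a) (ha2 : a ≤ lam - 1) :
    ∫ b in Set.Ioo (0:ℝ) 1, max (a + b - lam) 0 / (a * b) = 0 := by
  rw [setIntegral_congr_fun measurableSet_Ioo (g := fun _ => (0:ℝ)) ?_, integral_zero]
  intro b hb
  simp only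
  rw [max_eq_right (by linarith [hb.2]), zero_div]

lemma inner_eq (h1 : 1 < lam) (h2 : lam < 2) {a : ℝ} (ha1 : lam - 1 < a) (ha2 : a ≤ 1) :
    ∫ b in Set.Ioo (0:ℝ) 1, max (a + b - lam) 0 / (a * b)
      = (1 - lam + a + (lam - a) * Real.log (lam - a)) / a := by
  have ha0 : 0 < a := by linarith
  have hla0 : 0 < lam - a := by linarith
  have hla1 : lam - a < 1 := by linarith
  set f : ℝ → ℝ := fun b => max (a + b - lam) 0 / (a * b) with hf
  have hz : Set.EqOn f (fun _ => (0:ℝ)) (Set.Ioc (0:ℝ) (lam - a)) := by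
    intro b hb
    simp only [hf]
    rw [max_eq_right (by linarith [hb.2]), zero_div]
  have hfg : Set.EqOn f (fun b => (a + b - lam) / (a * b)) (Set.Icc (lam - a) 1) := by
    intro b hb
    simp only [hf]
    rw [max_eq_left (by linarith [hb.1])]
  have hgc : ContinuousOn (fun b => (a + b - lam) / (a * b)) (Set.Icc (lam - a) 1) := by
    apply ContinuousOn.div
    · exact ((continuous_const.add continuous_id).sub continuous_const).continuousOn
    · exact (continuous_const.mul continuous_id).continuousOn
    · intro b hb
      have : 0 < b := lt_of_lt_of_le hla0 hb.1
      positivity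
  have hint1 : IntervalIntegrable f volume 0 (lam - a) := by
    rw [intervalIntegrable_iff_integrableOn_Ioc_of_le hla0.le]
    exact (integrableOn_zero).congr_fun hz.symm measurableSet_Ioc
  have hint2 : IntervalIntegrable f volume (lam - a) 1 := by
    rw [intervalIntegrable_iff_integrableOn_Ioc_of_le hla1.le]
    exact ((hgc.integrableOn_compact isCompact_Icc).mono_set
      Set.Ioc_subset_Icc_self).congr_fun (hfg.mono Set.Ioc_subset_Icc_self).symm measurableSet_Ioc
  have hI1 : ∫ b in (0:ℝ)..(lam - a), f b = 0 := by
    rw [intervalIntegral.integral_of_le hla0.le,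
      setIntegral_congr_fun measurableSet_Ioc hz, integral_zero]
  have hF : ∀ b ∈ Set.uIcc (lam - a) 1,
      HasDerivAt (fun y => (y + (a - lam) * Real.log y) / a) ((a + b - lam) / (a * b)) b := by
    rw [Set.uIcc_of_le hla1.le]
    intro b hb
    have hb0 : 0 < b := lt_of_lt_of_le hla0 hb.1
    have h := ((hasDerivAt_id b).add
      ((Real.hasDerivAt_log hb0.ne').const_mul (a - lam))).div_const a
    refine h.congr_deriv ?_
    field_simp
    ring
  have hI2 : ∫ b in (lam - a)..1, f b
      = (1 - lam + a + (lam - a) * Real.log (lam - a)) / a := by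
    have hcongr : ∫ b in (lam - a)..1, f b = ∫ b in (lam - a)..1, (a + b - lam) / (a * b) := by
      apply intervalIntegral.integral_congr
      rw [Set.uIcc_of_le hla1.le]
      exact hfg
    rw [hcongr, intervalIntegral.integral_eq_sub_of_hasDerivAt hF
      (hgc.intervalIntegrable_of_Icc hla1.le)]
    rw [Real.log_one]
    field_simp
    ring
  have key : ∫ b in (0:ℝ)..1, f b = (1 - lam + a + (lam - a) * Real.log (lam - a)) / a := by
    rw [← intervalIntegral.integral_add_adjacent_intervals hint1 hint2, hI1, hI2, zero_add]
  rw [← integral_Ioc_eq_integral_Ioo, ← intervalIntegral.integral_of_le zero_le_one]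
  exact key

lemma Fmeas : Measurable (fun p : ℝ × ℝ => max (p.1 + p.2 - lam) 0 / (p.1 * p.2)) :=
  (((measurable_fst.add measurable_snd).sub measurable_const).max measurable_const).div
    (measurable_fst.mul measurable_snd)

lemma Fint (h1 : 1 < lam) (h2 : lam < 2) :
    IntegrableOn (fun p : ℝ × ℝ => max (p.1 + p.2 - lam) 0 / (p.1 * p.2))
      ((Set.Ioo (0:ℝ) 1) ×ˢ (Set.Ioo (0:ℝ) 1)) volume := by
  have hsq : MeasurableSet ((Set.Ioo (0:ℝ) 1) ×ˢ (Set.Ioo (0:ℝ) 1)) :=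
    measurableSet_Ioo.prod measurableSet_Ioo
  have hfin : volume ((Set.Ioo (0:ℝ) 1) ×ˢ (Set.Ioo (0:ℝ) 1)) < ⊤ := by
    rw [Measure.volume_eq_prod ℝ ℝ, Measure.prod_prod, Real.volume_Ioo]
    norm_num
  have : IsFiniteMeasure (volume.restrict ((Set.Ioo (0:ℝ) 1) ×ˢ (Set.Ioo (0:ℝ) 1))) := by
    constructor
    rwa [Measure.restrict_apply_univ]
  refine ⟨Fmeas.aestronglyMeasurable, HasFiniteIntegral.of_bounded (C := 1/(lam-1)^2) ?_⟩
  rw [ae_restrict_iff' hsq]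
  apply ae_of_all
  rintro p ⟨⟨ha0, ha1⟩, hb0, hb1⟩
  have hl0 : (0:ℝ) < (lam - 1)^2 := by nlinarith
  rw [Real.norm_eq_abs, abs_of_nonneg (by positivity)]
  rcases le_or_gt (p.1 + p.2) lam with h | h
  · rw [max_eq_right (by linarith), zero_div]
    positivity
  · rw [max_eq_left (by linarith)]
    have hden : (lam - 1)^2 ≤ p.1 * p.2 := by nlinarith
    have hnum : p.1 + p.2 - lam ≤ 1 := by linarith
    calc (p.1 + p.2 - lam) / (p.1 * p.2) ≤ 1 / (lam - 1)^2 :=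
      div_le_div₀ (by norm_num) hnum hl0 hden
    _ = 1/(lam-1)^2 := rfl

lemma J_eq_iterated (h1 : 1 < lam) (h2 : lam < 2) :
    J lam = ∫ a in Set.Ioo (0:ℝ) 1, ∫ b in Set.Ioo (0:ℝ) 1, max (a + b - lam) 0 / (a * b) := by
  have hsq : MeasurableSet ((Set.Ioo (0:ℝ) 1) ×ˢ (Set.Ioo (0:ℝ) 1)) :=
    measurableSet_Ioo.prod measurableSet_Ioo
  have h0 : J lam = ∫ p in (Set.Ioo (0:ℝ) 1) ×ˢ (Set.Ioo (0:ℝ) 1),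
      max (p.1 + p.2 - lam) 0 / (p.1 * p.2) := by
    exact setIntegral_congr_fun hsq (fun p hp => Jfun_eq h1 h2 hp)
  rw [h0]
  have := Fint h1 h2
  rw [Measure.volume_eq_prod ℝ ℝ] at this ⊢
  exact setIntegral_prod _ this


noncomputable def Hfun (lam a : ℝ) : ℝ :=
  a - (lam - 1) * Real.log a + lam * (Real.log lam * Real.log a - Li2 (a / lam))
    + ((lam - a) * Real.log (lam - a) - (lam - a))

lemma Hfun_hasDerivAt (h1 : 1 < lam) (h2 : lam < 2) {a : ℝ} (ha1 : lam - 1 ≤ a) (ha2 : a ≤ 1) :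
    HasDerivAt (Hfun lam) ((1 - lam + a + (lam - a) * Real.log (lam - a)) / a) a := by
  have ha0 : 0 < a := by linarith
  have hla0 : 0 < lam - a := by linarith
  have hlam0 : 0 < lam := by linarith
  have hq0 : 0 < a / lam := by positivity
  have hq1 : a / lam < 1 := by rw [div_lt_one hlam0]; linarith
  have e2 : HasDerivAt (fun y : ℝ => (lam - 1) * Real.log y) ((lam - 1) * a⁻¹) a :=
    (Real.hasDerivAt_log ha0.ne').const_mul (lam - 1)
  have e3 : HasDerivAt (fun y : ℝ => Real.log lam * Real.log y) (Real.log lam * a⁻¹) a :=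
    (Real.hasDerivAt_log ha0.ne').const_mul (Real.log lam)
  have e4 : HasDerivAt (fun y : ℝ => Li2 (y / lam))
      (-Real.log (1 - a / lam) / (a / lam) * (1 / lam)) a := by
    have hinner : HasDerivAt (fun y : ℝ => y / lam) (1 / lam) a := by
      simpa using (hasDerivAt_id a).div_const lam
    exact (Li2_hasDerivAt (abs_lt.2 ⟨by linarith, hq1⟩) hq0.ne').comp a hinner
  have hu : HasDerivAt (fun y : ℝ => lam - y) (-1) a := by
    simpa using (hasDerivAt_id a).const_sub lam
  have e5 : HasDerivAt (fun y : ℝ => (lam - y) * Real.log (lam - y))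
      ((Real.log (lam - a) + 1) * (-1)) a :=
    (Real.hasDerivAt_mul_log hla0.ne').comp a hu
  have total := (((hasDerivAt_id a).sub e2).add ((e3.sub e4).const_mul lam)).add (e5.sub hu)
  refine total.congr_deriv ?_
  have harg : 1 - a / lam = (lam - a) / lam := by field_simp
  rw [harg, Real.log_div hla0.ne' hlam0.ne']
  field_simp
  ring

lemma outer (h1 : 1 < lam) (h2 : lam < 2) :
    ∫ a in Set.Ioo (0:ℝ) 1, ∫ b in Set.Ioo (0:ℝ) 1, max (a + b - lam) 0 / (a * b)
      = Hfun lam 1 - Hfun lam (lam - 1) := by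
  set g : ℝ → ℝ := fun a => ∫ b in Set.Ioo (0:ℝ) 1, max (a + b - lam) 0 / (a * b) with hg
  set φ : ℝ → ℝ := fun a => (1 - lam + a + (lam - a) * Real.log (lam - a)) / a with hφ
  have hl0 : (0:ℝ) < lam - 1 := by linarith
  have hl1 : lam - 1 < 1 := by linarith
  have hg0 : Set.EqOn g (fun _ => (0:ℝ)) (Set.Ioc 0 (lam - 1)) :=
    fun a ha => inner_zero h1 ha.1 ha.2
  have hgφ : Set.EqOn g φ (Set.Ioc (lam - 1) 1) :=
    fun a ha => inner_eq h1 h2 ha.1 ha.2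
  have hφc : ContinuousOn φ (Set.Icc (lam - 1) 1) := by
    apply ContinuousOn.div
    · apply ContinuousOn.add
      · exact (continuous_const.add continuous_id).continuousOn
      · apply ContinuousOn.mul (continuous_const.sub continuous_id).continuousOn
        apply ContinuousOn.log (continuous_const.sub continuous_id).continuousOn
        intro a ha
        have : 0 < lam - a := by linarith [ha.2]
        exact this.ne'
    · exact continuous_id.continuousOn
    · intro a ha
      have : 0 < a := lt_of_lt_of_le hl0 ha.1
      exact this.ne'
  have hint1 : IntervalIntegrable g volume 0 (lam - 1) := by
    rw [intervalIntegrable_iff_integrableOn_Ioc_of_le hl0.le]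
    exact (integrableOn_zero).congr_fun hg0.symm measurableSet_Ioc
  have hint2 : IntervalIntegrable g volume (lam - 1) 1 := by
    rw [intervalIntegrable_iff_integrableOn_Ioc_of_le hl1.le]
    exact ((hφc.integrableOn_compact isCompact_Icc).mono_set
      Set.Ioc_subset_Icc_self).congr_fun (hgφ).symm measurableSet_Ioc
  have hI1 : ∫ a in (0:ℝ)..(lam - 1), g a = 0 := by
    rw [intervalIntegral.integral_of_le hl0.le,
      setIntegral_congr_fun measurableSet_Ioc hg0, integral_zero]
  have hI2 : ∫ a in (lam - 1)..1, g a = Hfun lam 1 - Hfun lam (lam - 1) := by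
    have hcongr : ∫ a in (lam - 1)..1, g a = ∫ a in (lam - 1)..1, φ a := by
      rw [intervalIntegral.integral_of_le hl1.le, intervalIntegral.integral_of_le hl1.le]
      exact setIntegral_congr_fun measurableSet_Ioc hgφ
    rw [hcongr]
    apply intervalIntegral.integral_eq_sub_of_hasDerivAt
    · rw [Set.uIcc_of_le hl1.le]
      exact fun a ha => Hfun_hasDerivAt h1 h2 ha.1 ha.2
    · exact hφc.intervalIntegrable_of_Icc hl1.le
  calc ∫ a in Set.Ioo (0:ℝ) 1, g a = ∫ a in (0:ℝ)..1, g a := by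
        rw [intervalIntegral.integral_of_le zero_le_one, integral_Ioc_eq_integral_Ioo]
    _ = (∫ a in (0:ℝ)..(lam - 1), g a) + ∫ a in (lam - 1)..1, g a :=
        (intervalIntegral.integral_add_adjacent_intervals hint1 hint2).symm
    _ = Hfun lam 1 - Hfun lam (lam - 1) := by rw [hI1, hI2, zero_add]

lemma refl_pi (x : ℝ) (hx : x ∈ Set.Ioo (0:ℝ) 1) :
    Li2 x + Li2 (1-x) + Real.log x * Real.log (1-x) = Real.pi^2/6 := by
  have h := refl_f_eq_pi x hx
  simpa [refl_f] using h

theorem J_formula_gt_one (lam : ℝ) (h1 : 1 < lam) (h2 : lam < 2) :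
    J lam = 2 + 2 * (lam - 1) * (Real.log (lam - 1) - 1)
      + lam * (Real.pi ^ 2 / 6 - (Real.log lam) ^ 2 - 2 * Li2 (1 / lam)) := by
  have hlam0 : (0:ℝ) < lam := by linarith
  rw [J_eq_iterated h1 h2, outer h1 h2]
  have hx : (1/lam : ℝ) ∈ Set.Ioo (0:ℝ) 1 :=
    ⟨by positivity, by rw [div_lt_one hlam0]; linarith⟩
  have hrefl := refl_pi (1/lam) hx
  have harg : (1:ℝ) - 1/lam = (lam - 1)/lam := by field_simp
  have hlog1 : Real.log (1/lam) = -Real.log lam := by rw [one_div, Real.log_inv]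
  have hlog2 : Real.log ((lam-1)/lam) = Real.log (lam-1) - Real.log lam :=
    Real.log_div (by linarith) (by linarith)
  rw [harg, hlog1, hlog2] at hrefl
  simp only [Hfun]
  rw [show lam - (lam - 1) = 1 by ring, Real.log_one]
  linear_combination lam * hrefl
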